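/- Let A be a noetherian domain and B a finite flat A-algebra which is Gorenstein over A (B^∨ = Hom_A(B,A) is flat of rank 1 over B), with B locally free over A. Suppose β : M × N → A is an A-bilinear, B-equivariant, non-degenerate pairing where M, N are B-modules finite flat over A and flat of rank 1 over B. Then the ideal L_β = image(β_B on (M ⊗_A B)[I] × (N ⊗_A B)[I]) equals the Noether different d(B/A) = mult((B ⊗_A B)[I]). -/
import Mathlib


open TensorProduct

section

variable (A B M N : Type*) [CommRing A] [CommRing B] [Algebra A B]
  [AddCommGroup M] [Module A M] [Module B M] [IsScalarTower A B M]
  [AddCommGroup N] [Module A N] [Module B N] [IsScalarTower A B N]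

/-- Scalar multiplication by `b ∈ B` on a `B`-module, as an `A`-linear map. -/
def smulMap (b : B) : M →ₗ[A] M := (LinearMap.lsmul B M b).restrictScalars A

/-- The `B`-module structure on `B^∨ = Hom_A(B, A)`: `(b • ψ)(x) = ψ(b x)`. -/
def dualSmulHom (b : B) : Module.Dual A B →ₗ[A] Module.Dual A B :=
  ((LinearMap.lsmul B B b).restrictScalars A).dualMap

/-- The `I`-torsion subset of `M ⊗_A B`, for `I = ker(B ⊗_A B → B)`. -/
def torsSet : Set (M ⊗[A] B) :=
  {x | ∀ b' : B, TensorProduct.map (smulMap A B M b') LinearMap.id x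
    = TensorProduct.map LinearMap.id (LinearMap.mulLeft A b') x}

/-- The base change `β_B` of `β : M × N → A` to `B`, packaged on the tensor product. -/
noncomputable def betaB (β : M →ₗ[A] N →ₗ[A] A) :
    (M ⊗[A] B) ⊗[A] (N ⊗[A] B) →ₗ[A] B :=
  (TensorProduct.lid A B).toLinearMap ∘ₗ
    TensorProduct.map (TensorProduct.lift β) (LinearMap.mul' A B) ∘ₗ
    (TensorProduct.tensorTensorTensorComm A M B N B).toLinearMap

end

/-! ### Auxiliary lemmas -/

section LNoetherAux

variable {A B : Type*} [CommRing A] [CommRing B] [Algebra A B]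

lemma LNoether.smulMap_eq_mulLeft (b : B) : smulMap A B B b = LinearMap.mulLeft A b := by
  ext x; simp [smulMap, smul_eq_mul]

lemma LNoether.betaB_tmul {M N : Type*}
    [AddCommGroup M] [Module A M] [Module B M] [IsScalarTower A B M]
    [AddCommGroup N] [Module A N] [Module B N] [IsScalarTower A B N]
    (β : M →ₗ[A] N →ₗ[A] A) (m : M) (b : B) (nn : N) (b' : B) :
    betaB A B M N β ((m ⊗ₜ[A] b) ⊗ₜ[A] (nn ⊗ₜ[A] b')) = β m nn • (b * b') := by
  simp [betaB, TensorProduct.tensorTensorTensorComm_tmul]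

/-- torsSet is stable under right multiplication. -/
lemma LNoether.tors_shift (g : B) {z : B ⊗[A] B} (hz : z ∈ torsSet A B B) :
    (TensorProduct.map LinearMap.id (LinearMap.mulLeft A g)) z ∈ torsSet A B B := by
  intro b'
  have hswap : ∀ (u v : B), (TensorProduct.map (LinearMap.mulLeft A u) LinearMap.id) ∘ₗ
      (TensorProduct.map LinearMap.id (LinearMap.mulLeft A v))
      = (TensorProduct.map LinearMap.id (LinearMap.mulLeft A v)) ∘ₗ
        (TensorProduct.map (LinearMap.mulLeft A u) LinearMap.id) := by
    intro u v
    apply TensorProduct.ext'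
    intro x y
    simp
  have hcomm : (TensorProduct.map (LinearMap.id : B →ₗ[A] B) (LinearMap.mulLeft A b')) ∘ₗ
      (TensorProduct.map LinearMap.id (LinearMap.mulLeft A g))
      = (TensorProduct.map LinearMap.id (LinearMap.mulLeft A g)) ∘ₗ
        (TensorProduct.map LinearMap.id (LinearMap.mulLeft A b')) := by
    apply TensorProduct.ext'
    intro x y
    simp [mul_left_comm]
  have h1 := DFunLike.congr_fun (hswap b' g) z
  have h2 := DFunLike.congr_fun (hcomm) z
  simp only [LinearMap.comp_apply] at h1 h2
  have hz' := hz b'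
  rw [LNoether.smulMap_eq_mulLeft] at hz' ⊢
  rw [h1, hz', ← h2]

variable {n : ℕ} (P : B →ₗ[A] B →ₗ[A] A) (e f : Fin n → B)

/-- The diagonal element `Δ = ∑ eᵢ ⊗ fᵢ` is in the torsion set. -/
lemma LNoether.delta_tors
    (hmul : ∀ (b x y : B), P (b * x) y = P x (b * y))
    (hsym : ∀ x y : B, P x y = P y x)
    (hR1 : ∀ b : B, ∑ i, P (f i) b • e i = b)
    (hR2 : ∀ b : B, ∑ i, P (e i) b • f i = b) :
    (∑ i, e i ⊗ₜ[A] f i) ∈ torsSet A B B := by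
  intro b'
  rw [map_sum, map_sum]
  simp only [TensorProduct.map_tmul, LNoether.smulMap_eq_mulLeft, LinearMap.mulLeft_apply,
    LinearMap.id_coe, id_eq]
  calc ∑ i, (b' * e i) ⊗ₜ[A] f i
      = ∑ i, (∑ j, P (f j) (b' * e i) • e j) ⊗ₜ[A] f i := by
        refine Finset.sum_congr rfl fun i _ => ?_
        rw [hR1 (b' * e i)]
    _ = ∑ j, ∑ i, P (e i) (b' * f j) • (e j ⊗ₜ[A] f i) := by
        rw [Finset.sum_comm]
        refine Finset.sum_congr rfl fun j _ => ?_
        rw [TensorProduct.sum_tmul]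
        refine Finset.sum_congr rfl fun i _ => ?_
        rw [TensorProduct.smul_tmul']
        congr 1
        rw [← hmul, hsym]
    _ = ∑ j, e j ⊗ₜ[A] (b' * f j) := by
        refine Finset.sum_congr rfl fun j _ => ?_
        simp only [← TensorProduct.tmul_smul, ← TensorProduct.tmul_sum]
        rw [hR2 (b' * f j)]
    _ = ∑ i, e i ⊗ₜ[A] (b' * f i) := rfl

/-- Expansion of any element of `B ⊗ B` in terms of the dual basis. -/
lemma LNoether.expand
    (hmul : ∀ (b x y : B), P (b * x) y = P x (b * y))
    (hR1 : ∀ b : B, ∑ i, P (f i) b • e i = b)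
    (z : B ⊗[A] B) :
    z = ∑ i, e i ⊗ₜ[A]
      ((TensorProduct.lid A B) ((TensorProduct.map (P 1) LinearMap.id)
        ((TensorProduct.map (LinearMap.mulLeft A (f i)) LinearMap.id) z))) := by
  have key : LinearMap.id (R := A) (M := B ⊗[A] B) = ∑ i, (TensorProduct.mk A B B (e i)) ∘ₗ
      (TensorProduct.lid A B).toLinearMap ∘ₗ (TensorProduct.map (P 1) LinearMap.id) ∘ₗ
      (TensorProduct.map (LinearMap.mulLeft A (f i)) LinearMap.id) := by
    apply TensorProduct.ext'
    intro x y
    simp only [LinearMap.id_coe, id_eq, LinearMap.sum_apply, LinearMap.comp_apply,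
      TensorProduct.map_tmul, LinearMap.mulLeft_apply, TensorProduct.lid_tmul,
      TensorProduct.mk_apply]
    have h1 : ∀ i : Fin n, P 1 (f i * x) = P (f i) x := by
      intro i; rw [← hmul]; ring_nf
    simp only [h1, TensorProduct.lid_tmul]
    symm
    calc ∑ i, e i ⊗ₜ[A] ((P (f i)) x • y)
        = ∑ i, ((P (f i)) x • e i) ⊗ₜ[A] y := by
          refine Finset.sum_congr rfl fun i _ => ?_
          rw [TensorProduct.tmul_smul, TensorProduct.smul_tmul']
      _ = x ⊗ₜ[A] y := by rw [← TensorProduct.sum_tmul, hR1]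
  conv_lhs => rw [← LinearMap.id_apply (R := A) z, key]
  simp only [LinearMap.sum_apply, LinearMap.comp_apply, TensorProduct.mk_apply,
    LinearEquiv.coe_coe]

/-- Characterization of torsion elements of `B ⊗ B`. -/
lemma LNoether.tors_char
    (hmul : ∀ (b x y : B), P (b * x) y = P x (b * y))
    (hR1 : ∀ b : B, ∑ i, P (f i) b • e i = b)
    {z : B ⊗[A] B} (hz : z ∈ torsSet A B B) :
    ∃ g : B, z = ∑ i, e i ⊗ₜ[A] (f i * g) := by
  set H : B ⊗[A] B →ₗ[A] B :=
    (TensorProduct.lid A B).toLinearMap ∘ₗ (TensorProduct.map (P 1) LinearMap.id) with hH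
  refine ⟨H z, ?_⟩
  have hHc : ∀ (c : B) (w : B ⊗[A] B),
      H ((TensorProduct.map LinearMap.id (LinearMap.mulLeft A c)) w) = c * H w := by
    intro c w
    have : H ∘ₗ (TensorProduct.map LinearMap.id (LinearMap.mulLeft A c))
        = (LinearMap.mulLeft A c) ∘ₗ H := by
      apply TensorProduct.ext'
      intro x y
      simp [hH, mul_smul_comm]
    exact DFunLike.congr_fun this w
  have hexp := LNoether.expand P e f hmul hR1 z
  conv_lhs => rw [hexp]
  refine Finset.sum_congr rfl fun i _ => ?_
  congr 1
  have h := hz (f i)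
  rw [LNoether.smulMap_eq_mulLeft] at h
  rw [h]
  exact hHc (f i) z

/-- Value of the base-changed pairing on torsion elements. -/
lemma LNoether.betaB_val
    (hR2 : ∀ b : B, ∑ i, P (e i) b • f i = b)
    (g h : B) :
    betaB A B B B P ((∑ i, e i ⊗ₜ[A] (f i * g)) ⊗ₜ[A] (∑ j, e j ⊗ₜ[A] (f j * h)))
      = (∑ j, e j * f j) * (g * h) := by
  rw [TensorProduct.sum_tmul, map_sum]
  calc ∑ i, betaB A B B B P ((e i ⊗ₜ[A] (f i * g)) ⊗ₜ[A] (∑ j, e j ⊗ₜ[A] (f j * h)))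
      = ∑ i, ∑ j, P (e i) (e j) • ((f i * g) * (f j * h)) := by
        refine Finset.sum_congr rfl fun i _ => ?_
        rw [TensorProduct.tmul_sum, map_sum]
        exact Finset.sum_congr rfl fun j _ =>
          LNoether.betaB_tmul P (e i) (f i * g) (e j) (f j * h)
    _ = ∑ j, ∑ i, (P (e i) (e j) • f i) * (g * (f j * h)) := by
        rw [Finset.sum_comm]
        refine Finset.sum_congr rfl fun j _ => Finset.sum_congr rfl fun i _ => ?_
        rw [smul_mul_assoc]
        congr 1
        ring
    _ = ∑ j, e j * (g * (f j * h)) := by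
        refine Finset.sum_congr rfl fun j _ => ?_
        rw [← Finset.sum_mul, hR2 (e j)]
    _ = (∑ j, e j * f j) * (g * h) := by
        rw [Finset.sum_mul]
        refine Finset.sum_congr rfl fun j _ => by ring

variable {M N : Type*}
  [AddCommGroup M] [Module A M] [Module B M] [IsScalarTower A B M]
  [AddCommGroup N] [Module A N] [Module B N] [IsScalarTower A B N]

/-- Transfer of torsion sets under a `B`-linear iso. -/
lemma LNoether.tors_transfer (eM : M ≃ₗ[A] B)
    (heM : ∀ (b : B) (m : M), eM (b • m) = b * eM m) (x : M ⊗[A] B) :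
    x ∈ torsSet A B M ↔
      (TensorProduct.congr eM (LinearEquiv.refl A B)) x ∈ torsSet A B B := by
  have key : ∀ b' : B,
      (TensorProduct.congr eM (LinearEquiv.refl A B)).toLinearMap ∘ₗ
        TensorProduct.map (smulMap A B M b') LinearMap.id
      = TensorProduct.map (smulMap A B B b') LinearMap.id ∘ₗ
        (TensorProduct.congr eM (LinearEquiv.refl A B)).toLinearMap := by
    intro b'
    apply TensorProduct.ext'
    intro m c
    simp [smulMap, heM, smul_eq_mul]
  have key2 : ∀ b' : B,
      (TensorProduct.congr eM (LinearEquiv.refl A B)).toLinearMap ∘ₗ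
        TensorProduct.map LinearMap.id (LinearMap.mulLeft A b')
      = TensorProduct.map LinearMap.id (LinearMap.mulLeft A b') ∘ₗ
        (TensorProduct.congr eM (LinearEquiv.refl A B)).toLinearMap := by
    intro b'
    apply TensorProduct.ext'
    intro m c
    simp
  constructor
  · intro hx b'
    have k1 := DFunLike.congr_fun (key b') x
    have k2 := DFunLike.congr_fun (key2 b') x
    simp only [LinearMap.comp_apply, LinearEquiv.coe_coe] at k1 k2
    rw [← k1, ← k2, hx b']
  · intro hx b'
    apply (TensorProduct.congr eM (LinearEquiv.refl A B)).injective
    have k1 := DFunLike.congr_fun (key b') x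
    have k2 := DFunLike.congr_fun (key2 b') x
    simp only [LinearMap.comp_apply, LinearEquiv.coe_coe] at k1 k2
    rw [k1, k2, hx b']

/-- Transfer of the base-changed pairing under `B`-linear isos. -/
lemma LNoether.betaB_transfer (eM : M ≃ₗ[A] B) (eN : N ≃ₗ[A] B)
    (β : M →ₗ[A] N →ₗ[A] A) (P : B →ₗ[A] B →ₗ[A] A)
    (hP : ∀ (m : M) (nn : N), P (eM m) (eN nn) = β m nn)
    (x : M ⊗[A] B) (y : N ⊗[A] B) :
    betaB A B M N β (x ⊗ₜ[A] y)
      = betaB A B B B P ((TensorProduct.congr eM (LinearEquiv.refl A B)) x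
          ⊗ₜ[A] (TensorProduct.congr eN (LinearEquiv.refl A B)) y) := by
  induction x using TensorProduct.induction_on with
  | zero => simp
  | add u v hu hv =>
    rw [TensorProduct.add_tmul, map_add, hu, hv, map_add, TensorProduct.add_tmul, map_add]
  | tmul m b =>
    induction y using TensorProduct.induction_on with
    | zero => simp
    | add u v hu hv =>
      rw [TensorProduct.tmul_add, map_add, hu, hv, map_add, TensorProduct.tmul_add, map_add]
    | tmul nn b' =>
      simp only [TensorProduct.congr_tmul, LinearEquiv.refl_apply]
      rw [LNoether.betaB_tmul, LNoether.betaB_tmul, hP]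

end LNoetherAux

/-- If `B` is a finite flat Gorenstein `A`-algebra over the noetherian domain `A`
(its dual `B^∨` is a rank-one `B`-module), `M` and `N` are rank-one `B`-modules finite
flat over `A`, and `β : M × N → A` is an `A`-bilinear `B`-equivariant non-degenerate
pairing, then the ideal `L_β` generated by the image of `β_B` on the `I`-torsion parts
equals the Noether different `d(B/A)`, the image under the multiplication map of the
`I`-torsion of `B ⊗_A B`. -/
theorem L_ideal_eq_noether_different
    (A B M N : Type*) [CommRing A] [IsDomain A] [IsNoetherianRing A]
    [CommRing B] [Algebra A B] [Module.Finite A B] [Module.Flat A B]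
    [AddCommGroup M] [Module A M] [Module B M] [IsScalarTower A B M]
    [Module.Finite A M] [Module.Flat A M]
    [AddCommGroup N] [Module A N] [Module B N] [IsScalarTower A B N]
    [Module.Finite A N] [Module.Flat A N]
    (hGor : ∃ e : Module.Dual A B ≃ₗ[A] B,
      ∀ (b : B) (ψ : Module.Dual A B), e (dualSmulHom A B b ψ) = b * e ψ)
    (eM : ∃ e : M ≃ₗ[A] B, ∀ (b : B) (m : M), e (b • m) = b * e m)
    (eN : ∃ e : N ≃ₗ[A] B, ∀ (b : B) (n : N), e (b • n) = b * e n)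
    (β : M →ₗ[A] N →ₗ[A] A)
    (hβ : ∀ (b : B) (m : M) (n : N), β (b • m) n = β m (b • n))
    (hnd : Function.Bijective β ∧ Function.Bijective β.flip) :
    Ideal.span {r : B | ∃ x ∈ torsSet A B M, ∃ y ∈ torsSet A B N,
        betaB A B M N β (x ⊗ₜ[A] y) = r}
      = Ideal.span {r : B | ∃ z ∈ torsSet A B B,
          Algebra.TensorProduct.lmul' A (S := B) z = r} := by
  classical
  obtain ⟨eM, heM⟩ := eM
  obtain ⟨eN, heN⟩ := eN
  -- the pairing transported to B × B
  set P : B →ₗ[A] B →ₗ[A] A :=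
    (eN.symm.dualMap.toLinearMap ∘ₗ β ∘ₗ eM.symm.toLinearMap) with hPdef
  have hPapp : ∀ x y : B, P x y = β (eM.symm x) (eN.symm y) := fun x y => rfl
  have hPbij : Function.Bijective P := by
    have : ⇑P = ⇑eN.symm.dualMap ∘ ⇑β ∘ ⇑eM.symm := by
      ext x; rfl
    rw [this]
    exact (eN.symm.dualMap.bijective.comp hnd.1).comp eM.symm.bijective
  have heMs : ∀ (b x : B), eM.symm (b * x) = b • eM.symm x := by
    intro b x
    apply eM.injective
    rw [heM, eM.apply_symm_apply, eM.apply_symm_apply]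
  have heNs : ∀ (b x : B), eN.symm (b * x) = b • eN.symm x := by
    intro b x
    apply eN.injective
    rw [heN, eN.apply_symm_apply, eN.apply_symm_apply]
  have hPmul : ∀ (b x y : B), P (b * x) y = P x (b * y) := by
    intro b x y
    rw [hPapp, hPapp, heMs, heNs, hβ]
  have hPsym : ∀ x y : B, P x y = P y x := by
    intro x y
    calc P x y = P (x * 1) y := by rw [mul_one]
      _ = P 1 (x * y) := hPmul x 1 y
      _ = P 1 (y * x) := by rw [mul_comm]
      _ = P (y * 1) x := (hPmul y 1 x).symm
      _ = P y x := by rw [mul_one]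
  -- dual basis of B over A
  obtain ⟨n, π, hπ⟩ := Module.Finite.exists_fin' A B
  have hfp : Module.FinitePresentation A B := Module.finitePresentation_of_finite A B
  have hproj : Module.Projective A B :=
    (Module.freeLocus_eq_univ_iff).mp Module.freeLocus_eq_univ
  obtain ⟨s, hs⟩ := Module.projective_lifting_property π LinearMap.id hπ
  set e : Fin n → B := fun i => π (fun j => if i = j then 1 else 0) with he
  set φ : Fin n → Module.Dual A B := fun i => (LinearMap.proj i) ∘ₗ s with hφ
  have hrel : ∀ b : B, ∑ i, φ i b • e i = b := by
    intro b
    have h1 := (LinearMap.pi_apply_eq_sum_univ π (s b)).symm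
    have h2 : π (s b) = b := by simpa using DFunLike.congr_fun hs b
    simpa [he, hφ, h2] using h1
  set Pe : B ≃ₗ[A] Module.Dual A B := LinearEquiv.ofBijective P hPbij with hPe
  set f : Fin n → B := fun i => Pe.symm (φ i) with hf
  have hPf : ∀ i, P (f i) = φ i := fun i => Pe.apply_symm_apply (φ i)
  have hR1 : ∀ b : B, ∑ i, P (f i) b • e i = b := by
    intro b
    simp only [hPf]
    exact hrel b
  have hR2 : ∀ b : B, ∑ i, P (e i) b • f i = b := by
    intro b
    apply hPbij.injective
    apply LinearMap.ext
    intro c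
    rw [map_sum]
    simp only [map_smul, LinearMap.sum_apply, LinearMap.smul_apply, smul_eq_mul]
    have hb : P b c = P c b := hPsym b c
    rw [hb]
    conv_rhs => rw [← hR1 c]
    rw [map_sum]
    simp only [map_smul, LinearMap.sum_apply, LinearMap.smul_apply, smul_eq_mul]
    exact Finset.sum_congr rfl fun i _ => mul_comm _ _
  set δ : B := ∑ i, e i * f i with hδ
  have hΔtors : (∑ i, e i ⊗ₜ[A] f i) ∈ torsSet A B B :=
    LNoether.delta_tors P e f hPmul hPsym hR1 hR2
  have hshift : ∀ g : B, (∑ i, e i ⊗ₜ[A] (f i * g)) ∈ torsSet A B B := by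
    intro g
    have h := LNoether.tors_shift g hΔtors
    have heq : (TensorProduct.map LinearMap.id (LinearMap.mulLeft A g))
        (∑ i, e i ⊗ₜ[A] f i) = ∑ i, e i ⊗ₜ[A] (f i * g) := by
      rw [map_sum]
      exact Finset.sum_congr rfl fun i _ => by simp [mul_comm]
    rwa [heq] at h
  have hlmul : ∀ g : B, Algebra.TensorProduct.lmul' A (S := B)
      (∑ i, e i ⊗ₜ[A] (f i * g)) = δ * g := by
    intro g
    rw [map_sum, hδ, Finset.sum_mul]
    exact Finset.sum_congr rfl fun i _ => by
      rw [Algebra.TensorProduct.lmul'_apply_tmul]; ring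
  have hPeq : ∀ (m : M) (nn : N), P (eM m) (eN nn) = β m nn := by
    intro m nn
    rw [hPapp, eM.symm_apply_apply, eN.symm_apply_apply]
  -- both sides equal span {δ}
  have hS2 : Ideal.span {r : B | ∃ z ∈ torsSet A B B,
      Algebra.TensorProduct.lmul' A (S := B) z = r} = Ideal.span {δ} := by
    apply le_antisymm
    · rw [Ideal.span_le]
      rintro r ⟨z, hz, rfl⟩
      obtain ⟨g, rfl⟩ := LNoether.tors_char P e f hPmul hR1 hz
      rw [SetLike.mem_coe, hlmul g]
      exact Ideal.mem_span_singleton.mpr ⟨g, rfl⟩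
    · rw [Ideal.span_le, Set.singleton_subset_iff]
      refine Ideal.subset_span ⟨∑ i, e i ⊗ₜ[A] (f i * 1), hshift 1, ?_⟩
      rw [hlmul 1, mul_one]
  have hS1 : Ideal.span {r : B | ∃ x ∈ torsSet A B M, ∃ y ∈ torsSet A B N,
      betaB A B M N β (x ⊗ₜ[A] y) = r} = Ideal.span {δ} := by
    apply le_antisymm
    · rw [Ideal.span_le]
      rintro r ⟨x, hx, y, hy, rfl⟩
      have hx' := (LNoether.tors_transfer eM heM x).mp hx
      have hy' := (LNoether.tors_transfer eN heN y).mp hy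
      obtain ⟨g, hg⟩ := LNoether.tors_char P e f hPmul hR1 hx'
      obtain ⟨h, hh⟩ := LNoether.tors_char P e f hPmul hR1 hy'
      rw [SetLike.mem_coe, LNoether.betaB_transfer eM eN β P hPeq x y, hg, hh,
        LNoether.betaB_val P e f hR2 g h, ← hδ]
      exact Ideal.mem_span_singleton.mpr ⟨g * h, rfl⟩
    · rw [Ideal.span_le, Set.singleton_subset_iff]
      refine Ideal.subset_span
        ⟨(TensorProduct.congr eM (LinearEquiv.refl A B)).symm (∑ i, e i ⊗ₜ[A] (f i * 1)),
          ?_,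
         (TensorProduct.congr eN (LinearEquiv.refl A B)).symm (∑ i, e i ⊗ₜ[A] (f i * 1)),
          ?_, ?_⟩
      · rw [LNoether.tors_transfer eM heM, LinearEquiv.apply_symm_apply]
        exact hshift 1
      · rw [LNoether.tors_transfer eN heN, LinearEquiv.apply_symm_apply]
        exact hshift 1
      · rw [LNoether.betaB_transfer eM eN β P hPeq, LinearEquiv.apply_symm_apply,
          LinearEquiv.apply_symm_apply, LNoether.betaB_val P e f hR2 1 1, ← hδ,
          mul_one, mul_one]
  rw [hS1, hS2]
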